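/- For every prime q with q ≡ 1 (mod 4) there is a prime p with p < q and (q/p) = -1. -/

import Mathlib

private lemma legendre_cast_eq {q : ℕ} [Fact q.Prime] {a b : ℤ}
    (h : (a : ZMod q) = (b : ZMod q)) : legendreSym q a = legendreSym q b := by
  unfold legendreSym
  rw [h]

private lemma exists_prime_factor_legendre_neg_one {q : ℕ} [Fact q.Prime] :
    ∀ m : ℕ, legendreSym q (m : ℤ) = -1 →
      ∃ p : ℕ, p.Prime ∧ p ∣ m ∧ legendreSym q (p : ℤ) = -1 := by
  intro m
  induction m using Nat.strong_induction_on with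
  | _ m ih =>
    intro hm
    have hm1 : m ≠ 1 := by
      rintro rfl
      simp [legendreSym.at_one] at hm
    have hm0 : m ≠ 0 := by
      rintro rfl
      simp [legendreSym.at_zero] at hm
    have hp : m.minFac.Prime := Nat.minFac_prime hm1
    obtain ⟨k, hk⟩ := Nat.minFac_dvd m
    have hmul := legendreSym.mul q (m.minFac : ℤ) (k : ℤ)
    rw [← Nat.cast_mul, ← hk] at hmul
    by_cases h : legendreSym q (m.minFac : ℤ) = -1
    · exact ⟨m.minFac, hp, ⟨k, hk⟩, h⟩
    · have hu : IsUnit (legendreSym q (m.minFac : ℤ)) := by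
        apply IsUnit.of_mul_eq_one (-(legendreSym q (k : ℤ)))
        rw [mul_neg, ← hmul, hm]; ring
      rcases Int.isUnit_iff.mp hu with h1 | h1
      · have hk' : legendreSym q (k : ℤ) = -1 := by
          rw [hmul, h1, one_mul] at hm; exact hm
        have hk0 : k ≠ 0 := by rintro rfl; rw [Nat.mul_zero] at hk; exact hm0 hk
        have hklt : k < m := by
          rw [hk]
          nlinarith [hp.two_le, Nat.pos_of_ne_zero hk0]
        obtain ⟨p, hpp, hpd, hpl⟩ := ih k hklt hk'
        have hkm : k ∣ m := by rw [hk]; exact dvd_mul_left k _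
        exact ⟨p, hpp, hpd.trans hkm, hpl⟩
      · exact absurd h1 h

theorem gauss_auxiliary_prime (q : ℕ) (hq : q.Prime) (hq4 : q % 4 = 1) :
    ∃ p : ℕ, ∃ hp : p.Prime, p < q ∧ @legendreSym p ⟨hp⟩ (q : ℤ) = -1 := by
  haveI : Fact q.Prime := ⟨hq⟩
  have hq2 : q ≠ 2 := by rintro rfl; omega
  have hq5 : 5 ≤ q := by
    have := hq.two_le; omega
  -- find a nonsquare in ZMod q
  have hchar : ringChar (ZMod q) ≠ 2 := by
    rw [ZMod.ringChar_zmod_n]; exact hq2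
  obtain ⟨a, ha⟩ := FiniteField.exists_nonsquare hchar
  set b := a.val with hb
  have hbq : b < q := a.val_lt
  have hcast : ((b : ℤ) : ZMod q) = a := by
    push_cast
    simp [hb, ZMod.natCast_val, ZMod.cast_id]
  have hlb : legendreSym q (b : ℤ) = -1 := by
    rw [legendreSym.eq_neg_one_iff, hcast]
    exact ha
  have hqodd : q % 2 = 1 := by omega
  have hb0 : b ≠ 0 := by
    rintro h
    rw [h] at hlb
    simp [legendreSym.at_zero] at hlb
  -- get an odd nonresidue m
  obtain ⟨m, hmodd, hmlt, hlm⟩ :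
      ∃ m : ℕ, m % 2 = 1 ∧ m < q ∧ legendreSym q (m : ℤ) = -1 := by
    by_cases hbo : b % 2 = 1
    · exact ⟨b, hbo, hbq, hlb⟩
    · refine ⟨q - b, by omega, by omega, ?_⟩
      have hcast2 : (((q - b : ℕ) : ℤ) : ZMod q) = ((-1 * b : ℤ) : ZMod q) := by
        push_cast [Nat.cast_sub hbq.le]
        simp
      rw [legendre_cast_eq hcast2, legendreSym.mul, legendreSym.at_neg_one hq2,
        ZMod.χ₄_nat_one_mod_four hq4, one_mul, hlb]
  obtain ⟨p, hpp, hpd, hpl⟩ := exists_prime_factor_legendre_neg_one m hlm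
  have hm0 : m ≠ 0 := by omega
  have hplt : p < q := lt_of_le_of_lt (Nat.le_of_dvd (Nat.pos_of_ne_zero hm0) hpd) hmlt
  have hp2 : p ≠ 2 := by
    rintro rfl
    obtain ⟨c, hc⟩ := hpd
    omega
  haveI : Fact p.Prime := ⟨hpp⟩
  refine ⟨p, hpp, hplt, ?_⟩
  have := legendreSym.quadratic_reciprocity_one_mod_four (p := q) (q := p) hq4 hp2
  rw [this]
  exact hpl
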